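/- Let n be a positive integer, let F be a subfield of ℚ(ζ_n), and let R be the ring of integers of F. Call integers x and y equivalent if ζ_n^x and ζ_n^y are conjugate over F (i.e., some field automorphism of ℚ(ζ_n) fixing F pointwise maps ζ_n^x to ζ_n^y), and let Γ_F be a set of representatives of the equivalence classes. For every x ∈ Γ_F let B_x be an integer, and for every integer i define ω_i = Σ_{x∈Γ_F} B_x · Tr_{ℚ(ζ_n)/F}(ζ_n^{ix}). Let d be a divisor of n such that ω_{d/q} = 0 for every prime power q ≠ 1 dividing d. Then ω_d ∈ d·R. -/

import Mathlib

open Polynomial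
open Polynomial in
lemma frob_aux (p : ℕ) (hp : p.Prime) (h : Polynomial ℤ) :
    ∃ T : Polynomial ℤ, h.comp (X ^ p) = h ^ p + C (p : ℤ) * T := by
  haveI : Fact p.Prime := ⟨hp⟩
  have hmap : (h.comp (X ^ p) - h ^ p).map (Int.castRingHom (ZMod p)) = 0 := by
    have hexp : ∀ f : (ZMod p)[X], f.comp (X ^ p) = f ^ p := by
      intro f
      rw [← expand_eq_comp_X_pow, ← map_frobenius_expand p f, ZMod.frobenius_zmod, Polynomial.map_id]
    rw [Polynomial.map_sub, Polynomial.map_comp, Polynomial.map_pow, Polynomial.map_pow, map_X,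
      hexp, sub_self]
  have hdvd : C (p : ℤ) ∣ h.comp (X ^ p) - h ^ p := by
    rw [C_dvd_iff_dvd_coeff]
    intro i
    have := congrArg (fun q => Polynomial.coeff q i) hmap
    simp only [Polynomial.coeff_map, Polynomial.coeff_zero] at this
    exact_mod_cast (ZMod.intCast_zmod_eq_zero_iff_dvd _ p).1 (by exact_mod_cast this)
  obtain ⟨T, hT⟩ := hdvd
  exact ⟨T, by linear_combination hT⟩

open Polynomial in
lemma pow_dvd_aux {A : Type*} [CommRing A] {p : ℕ} (hp : p.Prime)
    (htf : ∀ y : A, (p : A) * y = 0 → y = 0) :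
    ∀ (m : ℕ) (h : Polynomial ℤ) (a : ℕ → A),
      (∀ j, j < m → a j = a (j + 1) ^ p) →
      (∀ j, 1 ≤ j → j ≤ m → aeval (a j) h = 0) →
      ((p : A)) ^ m ∣ aeval (a 0) h := by
  intro m
  induction m with
  | zero => intro h a _ _; simp
  | succ m ih =>
    intro h a hpow hvan
    obtain ⟨T, hT⟩ := frob_aux p hp h
    have key : ∀ j, j < m + 1 →
        aeval (a j) h = aeval (a (j + 1)) h ^ p + (p : A) * aeval (a (j + 1)) T := by
      intro j hj
      have h1 : aeval (a (j + 1)) (h.comp (X ^ p)) = aeval (a j) h := by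
        rw [aeval_comp, map_pow, aeval_X, ← hpow j hj]
      rw [← h1, hT]
      simp [mul_comm]
    have hvanT : ∀ j, 1 ≤ j → j ≤ m → aeval (a (j + 1)) T = 0 := by
      intro j h1 h2
      apply htf
      have := key j (by omega)
      rw [hvan j h1 (by omega), hvan (j + 1) (by omega) (by omega)] at this
      rw [zero_pow hp.ne_zero, zero_add] at this
      exact this.symm
    have h0 : aeval (a 0) h = (p : A) * aeval (a 1) T := by
      rw [key 0 (by omega), hvan 1 (by omega) (by omega), zero_pow hp.ne_zero, zero_add]
    obtain ⟨t, ht⟩ := ih T (fun j => a (j + 1)) (fun j hj => hpow (j + 1) (by omega))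
      (fun j h1 h2 => hvanT j h1 h2)
    exact ⟨t, by rw [h0, ht, pow_succ]; ring⟩

lemma nat_cast_dvd_of_prime_pow_dvd {A : Type*} [CommRing A] (x : A) :
    ∀ d : ℕ, d ≠ 0 →
      (∀ p m : ℕ, p.Prime → p ^ m ∣ d → ((p : A)) ^ m ∣ x) → (d : A) ∣ x := by
  intro d
  induction d using Nat.strong_induction_on with
  | _ d ih =>
    intro hd0 hpp
    rcases eq_or_ne d 1 with rfl | hd1
    · simp
    · have hp : d.minFac.Prime := Nat.minFac_prime hd1
      set p := d.minFac with hpdef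
      set m := d.factorization p with hmdef
      have hm1 : 1 ≤ m := (hp.factorization_pos_of_dvd hd0 d.minFac_dvd)
      have hdvd : p ^ m ∣ d := Nat.ordProj_dvd d p
      have hdecomp : p ^ m * (d / p ^ m) = d := Nat.ordProj_mul_ordCompl_eq_self d p
      set d' := d / p ^ m with hd'def
      have hd'0 : d' ≠ 0 := by
        intro h
        rw [h, mul_zero] at hdecomp
        exact hd0 hdecomp.symm
      have hd'lt : d' < d := by
        have h1 : 1 < p ^ m := Nat.one_lt_pow (by omega) hp.one_lt
        calc d' < p ^ m * d' := by nlinarith [Nat.pos_of_ne_zero hd'0]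
          _ = d := hdecomp
      have h1 : (d' : A) ∣ x := ih d' hd'lt hd'0
        (fun q k hq hk => hpp q k hq (hk.trans ⟨p ^ m, by rw [← hdecomp]; ring⟩))
      have h2 : ((p : A)) ^ m ∣ x := hpp p m hp hdvd
      have hcop : Nat.Coprime (p ^ m) d' := (Nat.coprime_ordCompl hp hd0).pow_left m
      have hcopA : IsCoprime ((p : A) ^ m) ((d' : A)) := by
        have h3 := (Nat.isCoprime_iff_coprime.2 hcop).map (Int.castRingHom A)
        simp only [Int.coe_castRingHom] at h3
        push_cast at h3
        exact h3
      have := hcopA.mul_dvd h2 h1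
      rw [← hdecomp]
      push_cast
      exact this



/-- **Corollary.** Let `K = ℚ(ζ_n)` for a primitive `n`-th root of unity `ζ`, let
`F` be a subfield of `K` with ring of integers `R` (the integral closure of `ℤ` in
`F`), and let `Γ` be a set of representatives of the relation identifying `x` and
`y` when `ζ^x` and `ζ^y` are conjugate over `F`.  For integers `B_x` (`x ∈ Γ`) set
`ω_i = Σ_{x∈Γ} B_x · Tr_{K/F}(ζ^{i·x})`.  If `d ∣ n` and `ω_{d/q} = 0` for every
prime power `q ≠ 1` dividing `d`, then `ω_d ∈ d·R`. -/
theorem omega_trace_mem_of_vanishing (n : ℕ) (hn : 0 < n)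
    (K : Type*) [Field K] [CharZero K] (ζ : K) (hζ : IsPrimitiveRoot ζ n)
    (hK : IntermediateField.adjoin ℚ ({ζ} : Set K) = ⊤)
    (F : IntermediateField ℚ K)
    (Γ : Finset ℤ)
    (hΓ : ∀ y : ℤ, ∃! x, x ∈ Γ ∧ ∃ σ : K ≃ₐ[F] K, σ (ζ ^ x) = ζ ^ y)
    (B : ℤ → ℤ) (ω : ℤ → F)
    (hω : ∀ i : ℤ, ω i = ∑ x ∈ Γ, (B x : F) * Algebra.trace F K (ζ ^ (i * x)))
    (d : ℕ) (hd : d ∣ n)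
    (hvan : ∀ p m : ℕ, p.Prime → 1 ≤ m → p ^ m ∣ d → ω ((d / p ^ m : ℕ) : ℤ) = 0) :
    ∃ r ∈ integralClosure ℤ F, ω (d : ℤ) = (d : F) * r := by

  have hd0 : d ≠ 0 := by
    rintro rfl
    exact absurd (Nat.eq_zero_of_zero_dvd hd) hn.ne'
  have hζint : IsIntegral ℤ ζ := hζ.isIntegral hn
  have hζintQ : IsIntegral ℚ ζ := hζint.tower_top
  haveI : IsCyclotomicExtension {n} ℚ K := by
    rw [IsCyclotomicExtension.iff_adjoin_eq_top]
    refine ⟨fun m hm _ => ⟨ζ, by rw [Set.mem_singleton_iff] at hm; subst hm; exact hζ⟩, ?_⟩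
    rw [eq_top_iff]
    have h1 : (IntermediateField.adjoin ℚ ({ζ} : Set K)).toSubalgebra ≤
        Algebra.adjoin ℚ {b : K | ∃ m : ℕ, m ∈ ({n} : Set ℕ) ∧ m ≠ 0 ∧ b ^ m = 1} := by
      rw [IntermediateField.adjoin_simple_toSubalgebra_of_isAlgebraic hζintQ.isAlgebraic]
      apply Algebra.adjoin_mono
      intro b hb
      rw [Set.mem_singleton_iff] at hb
      subst hb
      exact ⟨n, Set.mem_singleton _, hn.ne', hζ.pow_eq_one⟩
    rw [hK] at h1
    exact fun x _ => h1 (IntermediateField.mem_top)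
  haveI : NeZero ((n : ℚ)) := ⟨by exact_mod_cast hn.ne'⟩
  haveI : FiniteDimensional ℚ K := IsCyclotomicExtension.finiteDimensional {n} ℚ K
  haveI : IsGalois ℚ K := IsCyclotomicExtension.isGalois {n} ℚ K
  haveI : FiniteDimensional F K := FiniteDimensional.right ℚ F K
  have hζne : ζ ≠ 0 := hζ.ne_zero hn.ne'
  haveI : NeZero n := ⟨hn.ne'⟩
  have conj : ∀ σ : K ≃ₐ[F] K, ∃ aexp : ℕ, σ ζ = ζ ^ aexp := by
    intro σ
    have h1 : (σ ζ) ^ n = 1 := by rw [← map_pow, hζ.pow_eq_one, map_one]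
    obtain ⟨i, _, hi⟩ := hζ.eq_pow_of_pow_eq_one h1
    exact ⟨i, hi.symm⟩
  choose aexp haexp using conj
  have hzp : ∀ u v : ℤ, (n : ℤ) ∣ u - v → ζ ^ u = ζ ^ v := by
    intro u v huv
    have h1 := (hζ.zpow_eq_one_iff_dvd (u - v)).2 huv
    calc ζ ^ u = ζ ^ (v + (u - v)) := by ring_nf
    _ = ζ ^ v * ζ ^ (u - v) := zpow_add₀ hζne _ _
    _ = ζ ^ v := by rw [h1, mul_one]
  set E : ℤ → (K ≃ₐ[F] K) → ℕ := fun x σ => ((x * (aexp σ : ℤ)) % (n : ℤ)).toNat with hE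
  set g : Polynomial ℤ := ∑ x ∈ Γ, ∑ σ : K ≃ₐ[F] K, Polynomial.C (B x) * Polynomial.X ^ (E x σ)
    with hg
  have claimA : ∀ i : ℤ, Polynomial.aeval (ζ ^ i) g = algebraMap F K (ω i) := by
    intro i
    rw [hω i, hg, map_sum, map_sum]
    refine Finset.sum_congr rfl fun x hx => ?_
    rw [map_mul, trace_eq_sum_automorphisms, Finset.mul_sum, map_sum]
    refine Finset.sum_congr rfl fun σ _ => ?_
    have hmain : (ζ ^ i) ^ (E x σ) = σ (ζ ^ (i * x)) := by
      have h1 : σ (ζ ^ (i * x)) = (σ ζ) ^ (i * x) := map_zpow₀ σ ζ (i * x)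
      have h2 : ((E x σ : ℤ)) = (x * (aexp σ : ℤ)) % (n : ℤ) := by
        rw [hE]
        exact Int.toNat_of_nonneg (Int.emod_nonneg _ (by exact_mod_cast hn.ne'))
      have hdvd : (n : ℤ) ∣ i * (E x σ : ℤ) - (aexp σ : ℤ) * (i * x) := by
        refine ⟨-(i * ((x * (aexp σ : ℤ)) / (n : ℤ))), ?_⟩
        have h3 := Int.mul_ediv_add_emod (x * (aexp σ : ℤ)) (n : ℤ)
        rw [h2]
        linear_combination i * h3
      calc (ζ ^ i) ^ (E x σ) = ζ ^ (i * (E x σ : ℤ)) := by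
            rw [← zpow_natCast (ζ ^ i), ← zpow_mul]
        _ = ζ ^ ((aexp σ : ℤ) * (i * x)) := hzp _ _ hdvd
        _ = (ζ ^ (aexp σ : ℕ)) ^ (i * x) := by
            rw [← zpow_natCast ζ (aexp σ), ← zpow_mul]
        _ = σ (ζ ^ (i * x)) := by rw [h1, haexp σ]
    rw [map_mul, Polynomial.aeval_C, map_pow, Polynomial.aeval_X, hmain]
    congr 1
  -- the integral element
  have hw : ∀ k : ℕ, IsIntegral ℤ (ζ ^ k) := fun k => hζint.pow k
  set A := integralClosure ℤ K with hA
  set w : A := ⟨ζ ^ d, hw d⟩ with hwdef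
  have claimB : ∀ p m : ℕ, p.Prime → p ^ m ∣ d → ((p : A)) ^ m ∣ Polynomial.aeval w g := by
    intro p m hp hpm
    set a : ℕ → A := fun j => ⟨ζ ^ (d / p ^ j), hw _⟩ with ha
    have htf : ∀ y : A, (p : A) * y = 0 → y = 0 := by
      intro y hy
      have h1 : ((p : A) * y : K) = 0 := by exact_mod_cast congrArg Subtype.val hy
      push_cast at h1
      rcases mul_eq_zero.1 h1 with h2 | h2
      · exact absurd h2 (by exact_mod_cast hp.ne_zero)
      · exact Subtype.ext (by exact_mod_cast h2)
    have hvan' : ∀ j, 1 ≤ j → j ≤ m → Polynomial.aeval (a j) g = 0 := by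
      intro j h1 h2
      have hpj : p ^ j ∣ d := (pow_dvd_pow p h2).trans hpm
      apply Subtype.ext
      have h3 : ((Polynomial.aeval (a j) g : A) : K) = Polynomial.aeval ((a j : K)) g :=
        Polynomial.aeval_subalgebra_coe g A (a j)
      have h4 : ((a j : A) : K) = ζ ^ (((d / p ^ j : ℕ) : ℤ)) :=
        (zpow_natCast ζ (d / p ^ j)).symm
      calc ((Polynomial.aeval (a j) g : A) : K)
          = Polynomial.aeval (ζ ^ (((d / p ^ j : ℕ) : ℤ))) g := by rw [h3, h4]
        _ = algebraMap F K (ω (((d / p ^ j : ℕ) : ℤ))) := claimA _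
        _ = 0 := by rw [hvan p j hp h1 hpj, map_zero]
        _ = ((0 : A) : K) := by simp
    have hpow : ∀ j, j < m → a j = a (j + 1) ^ p := by
      intro j hj
      apply Subtype.ext
      have hdj : p ^ (j + 1) ∣ d := (pow_dvd_pow p hj).trans hpm
      have hdjj : p ^ j ∣ d := (pow_dvd_pow p (Nat.le_of_lt hj)).trans hpm
      have h5 : d / p ^ (j + 1) * p = d / p ^ j := by
        have hpd : p ∣ d / p ^ j :=
          (Nat.dvd_div_iff_mul_dvd hdjj).2 (by rw [← pow_succ]; exact hdj)
        rw [pow_succ, ← Nat.div_div_eq_div_mul]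
        exact Nat.div_mul_cancel hpd
      calc ((a j : A) : K) = ζ ^ (d / p ^ j) := rfl
        _ = ζ ^ (d / p ^ (j + 1) * p) := by rw [h5]
        _ = (ζ ^ (d / p ^ (j + 1))) ^ p := by rw [pow_mul]
        _ = ((a (j + 1) ^ p : A) : K) := by push_cast; rfl
    have := pow_dvd_aux hp htf m g a hpow hvan'
    have ha0 : a 0 = w := by
      apply Subtype.ext
      show ζ ^ (d / p ^ 0) = ζ ^ d
      rw [pow_zero, Nat.div_one]
    rwa [ha0] at this
  have hdvdw : ((d : A)) ∣ Polynomial.aeval w g := by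
    exact nat_cast_dvd_of_prime_pow_dvd _ d hd0 claimB
  obtain ⟨t, ht⟩ := hdvdw
  have htK : (algebraMap F K) (ω (d : ℤ)) = (d : K) * (t : K) := by
    calc (algebraMap F K) (ω (d : ℤ)) = Polynomial.aeval (ζ ^ ((d : ℕ) : ℤ)) g := (claimA _).symm
      _ = Polynomial.aeval ((w : K)) g := by rw [zpow_natCast]
      _ = (d : K) * (t : K) := by
            have h3 := congrArg (Subtype.val) ht
            push_cast at h3
            exact h3
  have hdF : (d : F) ≠ 0 := Nat.cast_ne_zero.2 hd0
  refine ⟨(d : F)⁻¹ * ω (d : ℤ), ?_, by field_simp⟩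
  rw [mem_integralClosure_iff]
  rw [← isIntegral_algebraMap_iff (algebraMap F K).injective]
  have h4 : algebraMap F K ((d : F)⁻¹ * ω (d : ℤ)) = (t : K) := by
    rw [map_mul, map_inv₀, htK, map_natCast]
    have hdK : (d : K) ≠ 0 := Nat.cast_ne_zero.2 hd0
    field_simp
  rw [h4]
  exact t.2
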